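/- For every k ≥ 1, every g ∈ ℝ^k, and every μ ∈ ℝ satisfying Σ_{i=1}^{k} max(0, g_i − μ) = 1, the vector v ∈ ℝ^k with coordinates v_i = max(0, g_i − μ) lies in Δ_k and equals the Euclidean projection Π(g), i.e., v is the unique point of Δ_k minimizing ‖q − g‖₂ over q ∈ Δ_k. -/

import Mathlib

open scoped BigOperators

/-- The probability simplex in `ℝ^k`. -/
def simplex (k : ℕ) : Set (EuclideanSpace ℝ (Fin k)) :=
  {p | (∀ i, 0 ≤ p i) ∧ ∑ i, p i = 1}

/-- if `μ` satisfies `∑ i, max 0 (g i − μ) = 1`, then the vector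
`v = (max 0 (g i − μ))_i` lies in `Δ_k` and is the unique point of `Δ_k` minimizing the
Euclidean distance to `g`, i.e. `v = Π(g)`. -/
theorem stmt_8 (k : ℕ) (hk : 1 ≤ k) (g : EuclideanSpace ℝ (Fin k)) (μ : ℝ)
    (hμ : ∑ i, max 0 (g i - μ) = 1)
    (v : EuclideanSpace ℝ (Fin k)) (hv : ∀ i, v i = max 0 (g i - μ)) :
    v ∈ simplex k ∧ (∀ r ∈ simplex k, ‖v - g‖ ≤ ‖r - g‖) ∧
      ∀ q ∈ simplex k, (∀ r ∈ simplex k, ‖q - g‖ ≤ ‖r - g‖) → q = v := by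
  have hv0 : ∀ i, 0 ≤ v i := fun i => (hv i) ▸ le_max_left _ _
  have hvs : ∑ i, v i = 1 := by simp_rw [hv]; exact hμ
  have hmem : v ∈ simplex k := ⟨hv0, hvs⟩
  have key : ∀ r ∈ simplex k, (inner ℝ (g - v) (r - v) : ℝ) ≤ 0 := by
    intro r hr
    obtain ⟨hr0, hrs⟩ := hr
    have hin : (inner ℝ (g - v) (r - v) : ℝ) = ∑ i, (g i - v i) * (r i - v i) := by
      rw [PiLp.inner_apply]
      refine Finset.sum_congr rfl fun i _ => ?_
      simp [RCLike.inner_apply, mul_comm]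
    rw [hin]
    have hle : ∀ i, (g i - v i) * (r i - v i) ≤ μ * (r i - v i) := by
      intro i
      rcases le_or_gt (g i - μ) 0 with h | h
      · have hvi : v i = 0 := by rw [hv i]; exact max_eq_left h
        rw [hvi, sub_zero, sub_zero]
        exact mul_le_mul_of_nonneg_right (by linarith) (hr0 i)
      · have hvi : v i = g i - μ := by rw [hv i]; exact max_eq_right h.le
        have h2 : g i - v i = μ := by rw [hvi]; ring
        rw [h2]
    calc ∑ i, (g i - v i) * (r i - v i) ≤ ∑ i, μ * (r i - v i) :=
          Finset.sum_le_sum fun i _ => hle i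
      _ = μ * (∑ i, r i - ∑ i, v i) := by
          rw [← Finset.mul_sum, Finset.sum_sub_distrib]
      _ = 0 := by rw [hrs, hvs]; ring
  have dist_sq : ∀ r ∈ simplex k, ‖v - g‖ ^ 2 + ‖r - v‖ ^ 2 ≤ ‖r - g‖ ^ 2 := by
    intro r hr
    have h1 : r - g = (r - v) + (v - g) := by abel
    have h2 : ‖r - g‖ ^ 2 = ‖r - v‖ ^ 2 + 2 * inner ℝ (r - v) (v - g) + ‖v - g‖ ^ 2 := by
      rw [h1]; exact norm_add_sq_real _ _
    have h3 : (0 : ℝ) ≤ inner ℝ (r - v) (v - g) := by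
      have hk := key r hr
      have heq : (inner ℝ (r - v) (v - g) : ℝ) = - inner ℝ (g - v) (r - v) := by
        rw [real_inner_comm, ← neg_sub g v, inner_neg_left]
      rw [heq]; linarith
    linarith
  refine ⟨hmem, fun r hr => ?_, fun q hq hqmin => ?_⟩
  · have := dist_sq r hr
    nlinarith [norm_nonneg (v - g), norm_nonneg (r - g), sq_nonneg (‖r - v‖)]
  · have h1 := hqmin v hmem
    have h2 := dist_sq q hq
    have h3 : ‖q - v‖ = 0 := by
      nlinarith [norm_nonneg (q - v), norm_nonneg (q - g), norm_nonneg (v - g)]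
    have := norm_sub_eq_zero_iff.mp h3
    exact this
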